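/- Let M be a free ℤ-module of finite rank at least 1. For each nonzero integer k, suppose A_k ≤ M is a subgroup such that A_k ⊆ k·M and A_k contains an element of the form k·u with u primitive. Then for nonzero integers k₁, k₂ with |k₁| ≠ |k₂|, there is no automorphism f of M with f(A_{k₁}) = A_{k₂}. -/

import Mathlib

/-- A nonzero element of a free `ℤ`-module is primitive if its only integer
divisors are `±1`. -/
def IsPrimitiveElt {M : Type*} [AddCommGroup M] [Module ℤ M] (u : M) : Prop :=
  u ≠ 0 ∧ ∀ (n : ℤ) (v : M), u = n • v → n = 1 ∨ n = -1

lemma primitive_map {M : Type*} [AddCommGroup M] [inst : Module ℤ M] (f : M ≃ₗ[ℤ] M)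
    {u : M} (hu : IsPrimitiveElt u) : IsPrimitiveElt (f u) := by
  have he : inst = AddCommGroup.toIntModule M := (@AddCommGroup.uniqueIntModule M _).uniq inst
  subst he
  obtain ⟨h0, hdiv⟩ := hu
  refine ⟨by simpa using h0, fun n v hv => ?_⟩
  apply hdiv n (f.symm v)
  have : f.symm (f u) = f.symm (n • v) := by rw [hv]
  simpa using this

lemma dvd_of_smul_eq {M : Type*} [AddCommGroup M] [inst : Module ℤ M]
    [Module.Free ℤ M] {u y : M} {k₁ k₂ : ℤ} (hk₁ : k₁ ≠ 0)
    (hu : IsPrimitiveElt u) (h : k₁ • u = k₂ • y) : k₂ ∣ k₁ := by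
  have he : inst = AddCommGroup.toIntModule M := (@AddCommGroup.uniqueIntModule M _).uniq inst
  subst he
  haveI : NoZeroSMulDivisors ℤ M :=
    have := Module.isTorsionFree_int_iff_isAddTorsionFree.mp (inferInstance : Module.IsTorsionFree ℤ M)
    IsAddTorsionFree.to_noZeroSMulDivisors_int
  have hk₂ : k₂ ≠ 0 := by
    rintro rfl
    simp only [zero_smul] at h
    rcases smul_eq_zero.mp h with h' | h'
    · exact hk₁ h'
    · exact hu.1 h'
  set g : ℤ := (Int.gcd k₁ k₂ : ℤ) with hg
  have hg0 : g ≠ 0 := by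
    simp [hg, Int.gcd_eq_zero_iff, hk₁]
  obtain ⟨a, ha⟩ : g ∣ k₁ := Int.gcd_dvd_left _ _
  obtain ⟨b, hb⟩ : g ∣ k₂ := Int.gcd_dvd_right _ _
  -- Bezout: there are s, t with s * a + t * b = 1
  obtain ⟨s, t, hst⟩ : ∃ s t : ℤ, s * a + t * b = 1 := by
    obtain ⟨P, Q, hB⟩ : ∃ P Q : ℤ, g = k₁ * P + k₂ * Q :=
      ⟨Int.gcdA k₁ k₂, Int.gcdB k₁ k₂, by rw [hg]; exact Int.gcd_eq_gcd_ab k₁ k₂⟩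
    refine ⟨P, Q, ?_⟩
    have h1 : g * 1 = g * (P * a + Q * b) := by
      rw [ha, hb] at hB
      linarith [hB]
    exact mul_left_cancel₀ hg0 h1.symm
  have hcancel : a • u = b • y := by
    rw [ha, hb, mul_smul, mul_smul] at h
    exact smul_right_injective M hg0 h
  have hu' : u = b • (s • y + t • u) := by
    calc u = (s * a + t * b) • u := by rw [hst, one_smul]
      _ = s • (a • u) + t • (b • u) := by rw [add_smul, mul_smul, mul_smul]
      _ = s • (b • y) + t • (b • u) := by rw [hcancel]
      _ = b • (s • y + t • u) := by
          rw [smul_add, smul_comm s b y, smul_comm t b u]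
  rcases hu.2 b _ hu' with hb1 | hb1
  · rw [hb, hb1, mul_one]
    exact Int.gcd_dvd_left _ _
  · rw [hb, hb1, mul_neg_one]
    exact (neg_dvd).mpr (Int.gcd_dvd_left _ _)

/-- If for each nonzero `k` the subgroup `A k` is contained in `k • M` and
contains `k • u` for some primitive `u`, then for `|k₁| ≠ |k₂|` (both nonzero)
no automorphism of `M` maps `A k₁` onto `A k₂`. -/
theorem no_automorphism_between_levels {M : Type*} [AddCommGroup M] [Module ℤ M]
    [Module.Free ℤ M] [Module.Finite ℤ M] (hrank : 1 ≤ Module.finrank ℤ M)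
    (A : ℤ → AddSubgroup M)
    (hsub : ∀ k : ℤ, k ≠ 0 → ∀ x ∈ A k, ∃ y : M, x = k • y)
    (hprim : ∀ k : ℤ, k ≠ 0 → ∃ u : M, IsPrimitiveElt u ∧ k • u ∈ A k)
    (k₁ k₂ : ℤ) (hk₁ : k₁ ≠ 0) (hk₂ : k₂ ≠ 0) (habs : |k₁| ≠ |k₂|) :
    ¬ ∃ f : M ≃ₗ[ℤ] M, (A k₁).map f.toLinearMap.toAddMonoidHom = A k₂ := by
  rintro ⟨f, hf⟩
  have hfs : ∀ (k : ℤ) (x : M), f (k • x) = k • f x := fun k x => map_zsmul f.toAddEquiv k x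
  have hfs' : ∀ (k : ℤ) (x : M), f.symm (k • x) = k • f.symm x := fun k x =>
    map_zsmul f.symm.toAddEquiv k x
  -- direction 1: k₂ ∣ k₁
  obtain ⟨u₁, hu₁, hu₁A⟩ := hprim k₁ hk₁
  have h1 : k₁ • f u₁ ∈ A k₂ := by
    rw [← hf]
    exact ⟨k₁ • u₁, hu₁A, hfs k₁ u₁⟩
  obtain ⟨y, hy⟩ := hsub k₂ hk₂ _ h1
  have hd1 : k₂ ∣ k₁ := dvd_of_smul_eq hk₁ (primitive_map f hu₁) hy
  -- direction 2: k₁ ∣ k₂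
  obtain ⟨u₂, hu₂, hu₂A⟩ := hprim k₂ hk₂
  have h2 : k₂ • f.symm u₂ ∈ A k₁ := by
    obtain ⟨z, hz, hz'⟩ : k₂ • u₂ ∈ (A k₁).map f.toLinearMap.toAddMonoidHom := by
      rw [hf]; exact hu₂A
    have hzz : f.symm (k₂ • u₂) = z := by
      rw [← hz']; exact f.symm_apply_apply z
    rw [hfs' k₂ u₂] at hzz
    rw [hzz]; exact hz
  obtain ⟨y', hy'⟩ := hsub k₁ hk₁ _ h2
  have hd2 : k₁ ∣ k₂ := dvd_of_smul_eq hk₂ (primitive_map f.symm hu₂) hy'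
  exact habs (Int.dvd_antisymm (abs_nonneg _) (abs_nonneg _)
    ((abs_dvd _ _).mpr ((dvd_abs _ _).mpr hd2))
    ((abs_dvd _ _).mpr ((dvd_abs _ _).mpr hd1)))
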